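/- Suppose C, D are elements of a ℂ-algebra acting on a finite-dimensional complex vector space V via a representation ρ, with CD = q⁴DC, where q is a primitive N-th root of unity with N odd, ρ(D) invertible, and ρ(C^N) = c·Id for some c ∈ ℂ*. Then the eigenvalues of ρ(C) are among {ζ q^i : i = 0,…,N-1} for some fixed N-th root ζ of c, and conjugation by ρ(D) permutes the eigenspaces of ρ(C), multiplying the eigenvalue by q⁴; consequently all eigenspaces of ρ(C) corresponding to eigenvalues ζ q^i, i = 0,…,N-1, have the same dimension. -/

import Mathlib

/-- if `ρ(C)ρ(D)` satisfy `CD = q⁴DC` with `q` a primitive `N`-th root of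
unity (`N` odd), `ρ(D)` invertible and `ρ(C^N) = c·Id` with `c ≠ 0`, then the eigenvalues
of `ρ(C)` are among `{ζ q^i}` for some `N`-th root `ζ` of `c`, conjugation by `ρ(D)`
permutes the eigenspaces of `ρ(C)` multiplying the eigenvalue by `q⁴`, and all the
eigenspaces for the eigenvalues `ζ q^i`, `i = 0, …, N-1`, have the same dimension. -/
theorem eigenspace_decomposition {A : Type*} [Ring A] [Algebra ℂ A]
    {V : Type*} [AddCommGroup V] [Module ℂ V] [FiniteDimensional ℂ V] [Nontrivial V]
    (N : ℕ) (hN : Odd N) (q : ℂ) (hq : IsPrimitiveRoot q N)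
    (ρ : A →ₐ[ℂ] Module.End ℂ V) (C D : A) (c : ℂ) (hc : c ≠ 0)
    (hCD : C * D = (q ^ 4) • (D * C)) (hD : IsUnit (ρ D)) (hCN : ρ (C ^ N) = c • 1) :
    ∃ ζ : ℂ, ζ ^ N = c ∧
      (spectrum ℂ (ρ C) ⊆ {z | ∃ i : Fin N, z = ζ * q ^ (i : ℕ)}) ∧
      (∀ μ : ℂ, Submodule.map (ρ D) (Module.End.eigenspace (ρ C) μ) =
        Module.End.eigenspace (ρ C) (q ^ 4 * μ)) ∧
      ∀ i j : Fin N,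
        Module.finrank ℂ (Module.End.eigenspace (ρ C) (ζ * q ^ (i : ℕ))) =
        Module.finrank ℂ (Module.End.eigenspace (ρ C) (ζ * q ^ (j : ℕ))) := by
  have hN0 : N ≠ 0 := by rintro rfl; exact (Nat.not_odd_iff_even.mpr Even.zero) hN
  have hNpos : 0 < N := Nat.pos_of_ne_zero hN0
  haveI : NeZero N := ⟨hN0⟩
  obtain ⟨ζ, hζ⟩ := IsAlgClosed.exists_pow_nat_eq c hNpos
  have hζ0 : ζ ≠ 0 := by rintro rfl; exact hc (by simpa [hN0] using hζ.symm)
  have hq0 : q ≠ 0 := hq.ne_zero hN0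
  have hq4 : (q : ℂ) ^ 4 ≠ 0 := pow_ne_zero _ hq0
  have hinj : Function.Injective (ρ D) := ((Module.End.isUnit_iff _).mp hD).injective
  -- the commutation relation at the level of endomorphisms
  have hrel : ∀ u : V, (ρ C) ((ρ D) u) = (q ^ 4) • (ρ D) ((ρ C) u) := by
    intro u
    have := congrArg (fun f : Module.End ℂ V => f u) (congrArg ρ hCD)
    simpa [map_mul, map_smul, Module.End.mul_apply] using this
  -- the eigenspace mapping property
  have hmap : ∀ μ : ℂ, Submodule.map (ρ D) (Module.End.eigenspace (ρ C) μ) =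
      Module.End.eigenspace (ρ C) (q ^ 4 * μ) := by
    intro μ
    apply le_antisymm
    · rintro _ ⟨u, hu, rfl⟩
      simp only [SetLike.mem_coe, Module.End.mem_eigenspace_iff] at hu ⊢
      rw [hrel u, hu, map_smul, smul_smul]
    · intro w hw
      simp only [SetLike.mem_coe, Module.End.mem_eigenspace_iff] at hw
      refine ⟨hD.unit.inv w, ?_, Module.End.isUnit_apply_inv_apply_of_isUnit hD w⟩
      simp only [SetLike.mem_coe, Module.End.mem_eigenspace_iff]
      apply hinj
      apply smul_right_injective V hq4
      show q ^ 4 • (ρ D) ((ρ C) (hD.unit.inv w)) = q ^ 4 • (ρ D) (μ • hD.unit.inv w)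
      rw [← hrel, Module.End.isUnit_apply_inv_apply_of_isUnit hD w, hw,
        map_smul, smul_smul, Module.End.isUnit_apply_inv_apply_of_isUnit hD w]
  -- equal dimensions under multiplication by q^4
  have hdim : ∀ μ : ℂ, Module.finrank ℂ (Module.End.eigenspace (ρ C) μ) =
      Module.finrank ℂ (Module.End.eigenspace (ρ C) (q ^ 4 * μ)) := by
    intro μ
    rw [← hmap μ]
    exact (Submodule.equivMapOfInjective (ρ D) hinj _).finrank_eq
  have hdim' : ∀ (k : ℕ) (μ : ℂ), Module.finrank ℂ (Module.End.eigenspace (ρ C) μ) =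
      Module.finrank ℂ (Module.End.eigenspace (ρ C) (q ^ (4 * k) * μ)) := by
    intro k
    induction k with
    | zero => intro μ; rw [show q ^ (4 * 0) * μ = μ by ring]
    | succ k ih =>
      intro μ
      rw [show q ^ (4 * (k + 1)) * μ = q ^ 4 * (q ^ (4 * k) * μ) by ring,
        ih μ, hdim (q ^ (4 * k) * μ)]
  -- q-powers only depend on the exponent mod N
  have hmod : ∀ m : ℕ, q ^ m = q ^ (m % N) := by
    intro m
    conv_lhs => rw [← Nat.div_add_mod m N]
    rw [pow_add, pow_mul, hq.pow_eq_one, one_pow, one_mul]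
  have hqpow : ∀ m n : ℕ, (m : ZMod N) = n → q ^ m = q ^ n := by
    intro m n h
    rw [ZMod.natCast_eq_natCast_iff] at h
    rw [hmod m, hmod n, h]
  refine ⟨ζ, hζ, ?_, hmap, ?_⟩
  · intro z hz
    have hev : (ρ C).HasEigenvalue z := Module.End.hasEigenvalue_iff_mem_spectrum.mpr hz
    obtain ⟨v, hv, hv0⟩ := hev.exists_hasEigenvector
    have hv' : (ρ C) v = z • v := Module.End.mem_eigenspace_iff.mp hv
    have hvN : ∀ n : ℕ, ((ρ C) ^ n) v = z ^ n • v := by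
      intro n
      induction n with
      | zero => simp
      | succ n ih =>
        rw [pow_succ, pow_succ, Module.End.mul_apply, hv', map_smul, ih, smul_smul, mul_comm]
    have : c • v = z ^ N • v := by
      rw [← hvN N, ← map_pow ρ C N, hCN]; simp
    have hzN : z ^ N = c := by
      by_contra h
      exact hv0 (by
        have := sub_eq_zero.mpr this
        rw [← sub_smul] at this
        exact (smul_eq_zero.mp this).resolve_left (sub_ne_zero.mpr fun hh => h hh.symm))
    have hone : (z / ζ) ^ N = 1 := by
      rw [div_pow, hzN, hζ, div_self hc]
    obtain ⟨i, hi, hqi⟩ := hq.eq_pow_of_pow_eq_one hone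
    exact ⟨⟨i, hi⟩, by rw [hqi]; field_simp⟩
  · intro i j
    have hcop : Nat.Coprime 4 N := by
      have h2 : Nat.Coprime 2 N := (Nat.prime_two.coprime_iff_not_dvd).mpr
        (by rcases hN with ⟨k, rfl⟩; omega)
      have := h2.pow_left 2
      norm_num at this
      exact this
    have hu : IsUnit (4 : ZMod N) := by
      have := (ZMod.isUnit_iff_coprime 4 N).mpr hcop
      simpa using this
    set a : ZMod N := (4 : ZMod N)⁻¹ * ((j : ZMod N) - (i : ZMod N)) with ha
    have hkey : ((4 * a.val + i : ℕ) : ZMod N) = (j : ℕ) := by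
      push_cast
      rw [ZMod.natCast_val, ZMod.cast_id]
      rw [ha, ← mul_assoc, ZMod.mul_inv_of_unit 4 hu, one_mul]
      ring
    have heq : q ^ (4 * a.val) * (ζ * q ^ (i : ℕ)) = ζ * q ^ (j : ℕ) := by
      rw [← mul_assoc, mul_comm (q ^ (4 * a.val)) ζ, mul_assoc, ← pow_add,
        hqpow (4 * a.val + i) j hkey]
    rw [hdim' a.val (ζ * q ^ (i : ℕ)), heq]
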